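/- Let k be a field and let Δ be a d-dimensional simplicial complex with depth k[Δ] ≥ d (i.e., depth k[Δ] ≥ dim k[Δ] − 1). Then every d-dimensional Cohen–Macaulay complex Γ with Δ ⊆ Γ is a Cohen–Macaulay extender for Δ; that is, the relative complex (Γ,Δ) is relative Cohen–Macaulay. In particular, if Δ has n+1 vertices, the d-skeleton of the n-simplex, Δ_n^{(d)} = {σ ⊆ [n+1] : |σ| ≤ d+1}, is a Cohen–Macaulay extender for Δ. -/

import Mathlib

/-- A simplicial complex on vertex set `ℕ`: a finite collection of finite sets of
vertices (faces) closed under taking subsets. -/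
def IsComplex (Δ : Finset (Finset ℕ)) : Prop :=
  ∀ σ ∈ Δ, ∀ τ ⊆ σ, τ ∈ Δ

/-- `P` has dimension `d`: it is nonempty and its largest face has cardinality `d + 1`. -/
def dimIs (P : Finset (Finset ℕ)) (d : ℤ) : Prop :=
  P.Nonempty ∧ ((P.sup Finset.card : ℕ) : ℤ) = d + 1

/-- The link of the face `σ` in `Δ`:  `{τ ∈ Δ : σ ∪ τ ∈ Δ, σ ∩ τ = ∅}`. -/
def lkF (Δ : Finset (Finset ℕ)) (σ : Finset ℕ) : Finset (Finset ℕ) :=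
  Δ.filter (fun τ => σ ∪ τ ∈ Δ ∧ σ ∩ τ = ∅)

/-- The space of simplicial `k`-chains of cardinality `c` supported on the set of faces
`Q`: the free `k`-vector space on the faces of `Q` of cardinality `c`.  (Taking `Q = Δ`,
with `∅ ∈ Δ`, gives the augmented chain complex computing reduced homology; taking
`Q = Γ \ Δ` gives the relative chain complex of the pair `(Γ, Δ)`.) -/
abbrev Chains (k : Type) [Field k] (Q : Finset (Finset ℕ)) (c : ℤ) : Type :=
  {σ : Finset ℕ // σ ∈ Q ∧ (σ.card : ℤ) = c} → k

/-- The simplicial boundary operator from chains of cardinality `c + 1` to chains of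
cardinality `c`, given on basis elements by `∂σ = ∑_{v ∈ σ} (-1)^{|{w ∈ σ : w < v}|} (σ∖v)`
(discarding any `σ∖v ∉ Q`); here expressed on coordinates. -/
def bdryFun (k : Type) [Field k] (Q : Finset (Finset ℕ)) (c : ℤ)
    (f : Chains k Q (c + 1)) : Chains k Q c := fun τ =>
  ∑ v ∈ (Q.sup id) \ τ.1,
    if h : insert v τ.1 ∈ Q ∧ ((insert v τ.1).card : ℤ) = c + 1 then
      (-1 : k) ^ (τ.1.filter (· < v)).card * f ⟨insert v τ.1, h⟩
    else 0

/-- The boundary operator as a linear map. -/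
def bdry (k : Type) [Field k] (Q : Finset (Finset ℕ)) (c : ℤ) :
    Chains k Q (c + 1) →ₗ[k] Chains k Q c where
  toFun := bdryFun k Q c
  map_add' f g := by
    funext τ
    simp only [bdryFun, Pi.add_apply]
    rw [← Finset.sum_add_distrib]
    refine Finset.sum_congr rfl fun v hv => ?_
    split
    · rw [mul_add]
    · rw [add_zero]
  map_smul' a f := by
    funext τ
    simp only [bdryFun, Pi.smul_apply, smul_eq_mul, RingHom.id_apply, Finset.mul_sum]
    refine Finset.sum_congr rfl fun v hv => ?_
    split
    · ring
    · rw [mul_zero]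

/-- The reduced simplicial homology in dimension `n` with coefficients in the field `k`
of the (relative) complex whose set of faces is `Q`:  cycles of cardinality `n + 1`
modulo boundaries.  For `Q = Δ` a complex (which contains the empty face `∅` whenever it
is nonempty) this is the reduced homology `H̃_n(Δ; k)`; for `Q = Γ \ Δ` it is the
relative homology `H̃_n(Γ, Δ; k)`. -/
abbrev redH (k : Type) [Field k] (Q : Finset (Finset ℕ)) (n : ℤ) : Type :=
  LinearMap.ker (bdry k Q n) ⧸
    (LinearMap.range (bdry k Q (n + 1))).comap (LinearMap.ker (bdry k Q n)).subtype

/-- The `d`-dimensional complex `Γ` is Cohen–Macaulay over `k`: for every face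
`σ ∈ Γ`, the reduced homology `H̃_i(lk_Γ(σ); k)` vanishes for all
`i ≠ d - dim σ - 1 = d - |σ|`. -/
def IsCM (k : Type) [Field k] (Γ : Finset (Finset ℕ)) (d : ℤ) : Prop :=
  ∀ σ ∈ Γ, ∀ i : ℤ, i ≠ d - (σ.card : ℤ) → Subsingleton (redH k (lkF Γ σ) i)

/-- The relative complex `(Γ, Δ)`, with `dim Γ = d`, is relative Cohen–Macaulay over
`k`: for every face `σ` of `Γ`, the relative homology
`H̃_i(lk_Γ(σ), lk_Δ(σ); k)` vanishes except possibly when `|σ| + i = d`. -/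
def RelCM (k : Type) [Field k] (Γ Δ : Finset (Finset ℕ)) (d : ℤ) : Prop :=
  ∀ σ ∈ Γ, ∀ i : ℤ, (σ.card : ℤ) + i ≠ d →
    Subsingleton (redH k (lkF Γ σ \ lkF Δ σ) i)

/-- `depth k[Δ] ≥ h`, via Hochster's formula (Reisner's criterion for depth):
`H̃_i(lk_Δ(σ); k) = 0` whenever `|σ| + i + 1 < h`. -/
def DepthGE (k : Type) [Field k] (Δ : Finset (Finset ℕ)) (h : ℤ) : Prop :=
  ∀ σ ∈ Δ, ∀ i : ℤ, (σ.card : ℤ) + i + 1 < h → Subsingleton (redH k (lkF Δ σ) i)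

/-- The `d`-skeleton of the `n`-simplex on the vertex set `[n+1]`:
all subsets of `[n+1]` of cardinality at most `d + 1`. -/
def skeleton (n : ℕ) (d : ℤ) : Finset (Finset ℕ) :=
  (Finset.Icc 1 (n + 1)).powerset.filter (fun σ => (σ.card : ℤ) ≤ d + 1)


section Helpers
variable {k : Type} [Field k]

lemma subset_sup {Q : Finset (Finset ℕ)} {ρ : Finset ℕ} (h : ρ ∈ Q) : ρ ⊆ Q.sup id :=
  Finset.le_sup (f := id) h

lemma card_insert_int {v : ℕ} {τ : Finset ℕ} (h : v ∉ τ) :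
    ((insert v τ).card : ℤ) = (τ.card : ℤ) + 1 := by
  rw [Finset.card_insert_of_notMem h]; push_cast; ring

lemma bdry_apply (Q : Finset (Finset ℕ)) (c : ℤ) (f : Chains k Q (c+1))
    (τ : {σ : Finset ℕ // σ ∈ Q ∧ (σ.card : ℤ) = c}) :
    bdry k Q c f τ = ∑ v ∈ (Q.sup id) \ τ.1,
      if h : insert v τ.1 ∈ Q ∧ ((insert v τ.1).card : ℤ) = c + 1 then
        (-1 : k) ^ (τ.1.filter (· < v)).card * f ⟨insert v τ.1, h⟩
      else 0 := rfl

/-- Subsingleton of chains when there are no faces of the right cardinality. -/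
lemma chains_subsingleton {Q : Finset (Finset ℕ)} {c : ℤ}
    (h : ∀ ρ ∈ Q, (ρ.card : ℤ) ≠ c) : Subsingleton (Chains k Q c) := by
  constructor
  intro f g
  funext ρ
  exact absurd ρ.2.2 (h ρ.1 ρ.2.1)

lemma redH_subsingleton_of_chains {Q : Finset (Finset ℕ)} {n : ℤ}
    (h : ∀ ρ ∈ Q, (ρ.card : ℤ) ≠ n + 1) : Subsingleton (redH k Q n) := by
  have h1 : Subsingleton (Chains k Q (n+1)) := chains_subsingleton h
  have h2 : Subsingleton (LinearMap.ker (bdry k Q n)) :=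
    ⟨fun a b => Subtype.ext (Subsingleton.elim a.1 b.1)⟩
  constructor
  intro a b
  obtain ⟨x, rfl⟩ := Submodule.Quotient.mk_surjective _ a
  obtain ⟨y, rfl⟩ := Submodule.Quotient.mk_surjective _ b
  rw [Subsingleton.elim x y]

/-- Subsingleton of reduced homology is equivalent to exactness. -/
lemma redH_subsingleton_iff {Q : Finset (Finset ℕ)} {n : ℤ} :
    Subsingleton (redH k Q n) ↔
      ∀ z : Chains k Q (n+1), bdry k Q n z = 0 →
        ∃ y : Chains k Q (n+1+1), bdry k Q (n+1) y = z := by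
  rw [Submodule.Quotient.subsingleton_iff]
  rw [Submodule.eq_top_iff']
  constructor
  · intro H z hz
    have := H ⟨z, hz⟩
    rw [Submodule.mem_comap, LinearMap.mem_range] at this
    exact this
  · intro H x
    rw [Submodule.mem_comap, LinearMap.mem_range]
    exact H x.1 x.2

end Helpers
section Restrict
variable {k : Type} [Field k]

/-- Comparing the boundary in `P` with the boundary in `Q ⊆ P`. -/
lemma bdry_restrict {Q P : Finset (Finset ℕ)} (hQP : Q ⊆ P) (c : ℤ)
    (F : Chains k P (c+1)) (t' : Finset ℕ)
    (hkey : ∀ v, v ∉ t' → ∀ (h1 : insert v t' ∈ P)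
      (h2 : ((insert v t').card : ℤ) = c+1), insert v t' ∉ Q → F ⟨insert v t', h1, h2⟩ = 0)
    (htQ : t' ∈ Q) (htc : ((t' : Finset ℕ).card : ℤ) = c) :
    bdry k P c F ⟨t', hQP htQ, htc⟩
      = bdry k Q c (fun ρ => F ⟨ρ.1, hQP ρ.2.1, ρ.2.2⟩) ⟨t', htQ, htc⟩ := by
  rw [bdry_apply, bdry_apply]
  have hsub : Q.sup id \ t' ⊆ P.sup id \ t' :=
    Finset.sdiff_subset_sdiff (Finset.sup_mono hQP) le_rfl
  calc (∑ v ∈ (P.sup id) \ t',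
      if h : insert v t' ∈ P ∧ ((insert v t').card : ℤ) = c + 1 then
        (-1 : k) ^ (t'.filter (· < v)).card * F ⟨insert v t', h⟩
      else 0)
      = ∑ v ∈ (P.sup id) \ t',
        (if h : insert v t' ∈ Q ∧ ((insert v t').card : ℤ) = c + 1 then
          (-1 : k) ^ (t'.filter (· < v)).card * F ⟨insert v t', hQP h.1, h.2⟩
        else 0) := by
        refine Finset.sum_congr rfl fun v hv => ?_
        have hv' : v ∉ t' := (Finset.mem_sdiff.1 hv).2
        by_cases hq : insert v t' ∈ Q ∧ ((insert v t').card : ℤ) = c + 1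
        · rw [dif_pos hq, dif_pos ⟨hQP hq.1, hq.2⟩]
        · rw [dif_neg hq]
          by_cases hp : insert v t' ∈ P ∧ ((insert v t').card : ℤ) = c + 1
          · rw [dif_pos hp, hkey v hv' hp.1 hp.2 (fun hQ => hq ⟨hQ, hp.2⟩), mul_zero]
          · rw [dif_neg hp]
    _ = ∑ v ∈ (Q.sup id) \ t',
        (if h : insert v t' ∈ Q ∧ ((insert v t').card : ℤ) = c + 1 then
          (-1 : k) ^ (t'.filter (· < v)).card * F ⟨insert v t', hQP h.1, h.2⟩
        else 0) := by
        refine (Finset.sum_subset hsub fun v hv hvn => ?_).symm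
        rw [dif_neg]
        rintro ⟨hQ, -⟩
        exact hvn (Finset.mem_sdiff.2 ⟨subset_sup hQ (Finset.mem_insert_self v t'),
          (Finset.mem_sdiff.1 hv).2⟩)
    _ = _ := by
        refine Finset.sum_congr rfl fun v hv => ?_
        by_cases hq : insert v t' ∈ Q ∧ ((insert v t').card : ℤ) = c + 1
        · rw [dif_pos hq]
        · rw [dif_neg hq]

/-- The boundary vanishes if the chain vanishes on all cofaces of `t'`. -/
lemma bdry_eq_zero {P : Finset (Finset ℕ)} (c : ℤ) (F : Chains k P (c+1)) (t' : Finset ℕ)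
    (hkey : ∀ v, v ∉ t' → ∀ (h1 : insert v t' ∈ P)
      (h2 : ((insert v t').card : ℤ) = c+1), F ⟨insert v t', h1, h2⟩ = 0)
    (htP : t' ∈ P) (htc : ((t' : Finset ℕ).card : ℤ) = c) :
    bdry k P c F ⟨t', htP, htc⟩ = 0 := by
  rw [bdry_apply]
  refine Finset.sum_eq_zero fun v hv => ?_
  have hv' : v ∉ t' := (Finset.mem_sdiff.1 hv).2
  by_cases hp : insert v t' ∈ P ∧ ((insert v t').card : ℤ) = c + 1
  · rw [dif_pos hp, hkey v hv' hp.1 hp.2, mul_zero]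
  · rw [dif_neg hp]

end Restrict
section BdryBdry
variable {k : Type} [Field k]

lemma filter_card_insert {v u : ℕ} {t : Finset ℕ} (hv : v ∉ t) :
    ((insert v t).filter (· < u)).card
      = (t.filter (· < u)).card + if v < u then 1 else 0 := by
  rw [Finset.filter_insert]
  split_ifs with h
  · rw [Finset.card_insert_of_notMem (fun hc => hv (Finset.mem_of_mem_filter v hc))]
  · rw [add_zero]

/-- The summand appearing in `∂∂f`. -/
def Gd {Q : Finset (Finset ℕ)} {c : ℤ} (f : Chains k Q (c+1+1)) (t : Finset ℕ)
    (v u : ℕ) : k :=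
  if h1 : insert v t ∈ Q ∧ ((insert v t).card : ℤ) = c + 1 then
    if h2 : insert u (insert v t) ∈ Q ∧ ((insert u (insert v t)).card : ℤ) = c + 1 + 1 then
      (-1:k) ^ (t.filter (· < v)).card *
        ((-1:k) ^ ((insert v t).filter (· < u)).card * f ⟨insert u (insert v t), h2⟩)
    else 0
  else 0

lemma Gd_diag {Q : Finset (Finset ℕ)} {c : ℤ} (f : Chains k Q (c+1+1)) (t : Finset ℕ)
    (v : ℕ) : Gd f t v v = 0 := by
  unfold Gd
  by_cases h1 : insert v t ∈ Q ∧ ((insert v t).card : ℤ) = c + 1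
  · rw [dif_pos h1, dif_neg]
    rintro ⟨-, hc⟩
    rw [Finset.insert_idem] at hc
    omega
  · rw [dif_neg h1]

lemma Gd_antisymm {Q : Finset (Finset ℕ)} {c : ℤ} (f : Chains k Q (c+1+1))
    (hQ : ∀ a b c', a ∈ Q → c' ∈ Q → a ⊆ b → b ⊆ c' → b ∈ Q)
    {t : Finset ℕ} (htQ : t ∈ Q) (htc : ((t : Finset ℕ).card : ℤ) = c)
    {v u : ℕ} (hv : v ∉ t) (hu : u ∉ t) :
    Gd f t v u + Gd f t u v = 0 := by
  rcases eq_or_ne v u with rfl | hvu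
  · rw [Gd_diag, add_zero]
  have hcomm : insert v (insert u t) = insert u (insert v t) := Finset.insert_comm v u t
  by_cases htop : insert u (insert v t) ∈ Q ∧ ((insert u (insert v t)).card : ℤ) = c + 1 + 1
  · have huI : u ∉ insert v t := by
      simp only [Finset.mem_insert]
      push_neg
      exact ⟨hvu.symm, hu⟩
    have hvI : v ∉ insert u t := by
      simp only [Finset.mem_insert]
      push_neg
      exact ⟨hvu, hv⟩
    have hcard1 : ((insert v t).card : ℤ) = c + 1 := by rw [card_insert_int hv, htc]
    have hcard1' : ((insert u t).card : ℤ) = c + 1 := by rw [card_insert_int hu, htc]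
    have hmem1 : insert v t ∈ Q :=
      hQ t _ _ htQ htop.1 (Finset.subset_insert v t) (Finset.subset_insert u _)
    have hmem1' : insert u t ∈ Q := by
      refine hQ t _ (insert u (insert v t)) htQ htop.1 (Finset.subset_insert u t) ?_
      rw [← hcomm]
      exact Finset.subset_insert v (insert u t)
    have htop' : insert v (insert u t) ∈ Q ∧ ((insert v (insert u t)).card : ℤ) = c + 1 + 1 := by
      rw [hcomm]; exact htop
    unfold Gd
    rw [dif_pos ⟨hmem1, hcard1⟩, dif_pos htop, dif_pos ⟨hmem1', hcard1'⟩, dif_pos htop']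
    have harg : (⟨insert v (insert u t), htop'⟩ :
        {σ : Finset ℕ // σ ∈ Q ∧ (σ.card : ℤ) = c + 1 + 1}) = ⟨insert u (insert v t), htop⟩ :=
      Subtype.ext hcomm
    rw [harg, filter_card_insert hv, filter_card_insert hu]
    rcases lt_or_gt_of_ne hvu with h | h
    · rw [if_pos h, if_neg (asymm h), add_zero, pow_succ]
      ring
    · rw [if_pos h, if_neg (asymm h), add_zero, pow_succ]
      ring
  · unfold Gd
    rw [← hcomm]
    rw [← hcomm] at htop
    simp only [dif_neg htop]
    simp

end BdryBdry
section BdryBdryMain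
variable {k : Type} [Field k]

lemma bdry_bdry {Q : Finset (Finset ℕ)}
    (hQ : ∀ a b c', a ∈ Q → c' ∈ Q → a ⊆ b → b ⊆ c' → b ∈ Q)
    (c : ℤ) (f : Chains k Q (c+1+1)) :
    bdry k Q c (bdry k Q (c+1) f) = 0 := by
  funext τ
  obtain ⟨t, htQ, htc⟩ := τ
  show bdry k Q c (bdry k Q (c+1) f) ⟨t, htQ, htc⟩ = 0
  have hAe : ∀ v : ℕ, Q.sup id \ insert v t = (Q.sup id \ t).erase v := fun v =>
    Finset.sdiff_insert _ _ _
  calc bdry k Q c (bdry k Q (c+1) f) ⟨t, htQ, htc⟩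
      = ∑ v ∈ Q.sup id \ t, ∑ u ∈ Q.sup id \ insert v t, Gd f t v u := by
        rw [bdry_apply]
        refine Finset.sum_congr rfl fun v hv => ?_
        by_cases h1 : insert v t ∈ Q ∧ ((insert v t).card : ℤ) = c + 1
        · rw [dif_pos h1, bdry_apply, Finset.mul_sum]
          refine Finset.sum_congr rfl fun u hu => ?_
          unfold Gd
          rw [dif_pos h1]
          by_cases h2 : insert u (insert v t) ∈ Q ∧
              ((insert u (insert v t)).card : ℤ) = c + 1 + 1
          · rw [dif_pos h2, dif_pos h2]
          · rw [dif_neg h2, dif_neg h2, mul_zero]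
        · rw [dif_neg h1]
          refine (Finset.sum_eq_zero fun u hu => ?_).symm
          unfold Gd
          rw [dif_neg h1]
    _ = ∑ v ∈ Q.sup id \ t, ∑ u ∈ Q.sup id \ t, Gd f t v u := by
        refine Finset.sum_congr rfl fun v hv => ?_
        rw [hAe v, Finset.sum_erase _ (Gd_diag f t v)]
    _ = ∑ p ∈ (Q.sup id \ t) ×ˢ (Q.sup id \ t), Gd f t p.1 p.2 :=
        (Finset.sum_product' _ _ _).symm
    _ = 0 := by
        refine Finset.sum_involution (fun p _ => (p.2, p.1)) ?_ ?_ ?_ ?_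
        · intro p hp
          rw [Finset.mem_product] at hp
          exact Gd_antisymm f hQ htQ htc (Finset.mem_sdiff.1 hp.1).2
            (Finset.mem_sdiff.1 hp.2).2
        · intro p hp hne heq
          apply hne
          have h12 : p.2 = p.1 := congrArg Prod.fst heq
          rw [show p = (p.1, p.2) from rfl, ← h12]
          exact Gd_diag f t p.2
        · intro p hp
          rw [Finset.mem_product] at hp ⊢
          exact ⟨hp.2, hp.1⟩
        · intro p hp
          rfl

end BdryBdryMain
section Links
variable {k : Type} [Field k]

lemma mem_lkF {Δ : Finset (Finset ℕ)} {σ τ : Finset ℕ} :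
    τ ∈ lkF Δ σ ↔ τ ∈ Δ ∧ σ ∪ τ ∈ Δ ∧ σ ∩ τ = ∅ := by
  simp [lkF, Finset.mem_filter]

lemma lkF_complex {Δ : Finset (Finset ℕ)} (hΔ : IsComplex Δ) (σ : Finset ℕ) :
    IsComplex (lkF Δ σ) := by
  intro τ hτ ρ hρ
  rw [mem_lkF] at hτ ⊢
  refine ⟨hΔ τ hτ.1 ρ hρ, hΔ (σ ∪ τ) hτ.2.1 (σ ∪ ρ) (Finset.union_subset_union_right hρ), ?_⟩
  have : σ ∩ ρ ⊆ σ ∩ τ := Finset.inter_subset_inter le_rfl hρ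
  rw [hτ.2.2] at this
  exact Finset.subset_empty.1 this

lemma lkF_mono {Δ Γ : Finset (Finset ℕ)} (h : Δ ⊆ Γ) (σ : Finset ℕ) :
    lkF Δ σ ⊆ lkF Γ σ := by
  intro τ hτ
  rw [mem_lkF] at hτ ⊢
  exact ⟨h hτ.1, h hτ.2.1, hτ.2.2⟩

lemma complex_sandwich {Q : Finset (Finset ℕ)} (h : IsComplex Q) :
    ∀ a b c', a ∈ Q → c' ∈ Q → a ⊆ b → b ⊆ c' → b ∈ Q :=
  fun _ b c' _ hc _ hbc => h c' hc b hbc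

lemma card_le_of_dim {Γ : Finset (Finset ℕ)} {d : ℤ} (hdim : dimIs Γ d)
    {ρ : Finset ℕ} (hρ : ρ ∈ Γ) : (ρ.card : ℤ) ≤ d + 1 := by
  have : ρ.card ≤ Γ.sup Finset.card := Finset.le_sup hρ
  have := hdim.2
  omega

lemma lk_card_le {Γ : Finset (Finset ℕ)} {d : ℤ} (hdim : dimIs Γ d)
    {σ τ : Finset ℕ} (hτ : τ ∈ lkF Γ σ) : (σ.card : ℤ) + (τ.card : ℤ) ≤ d + 1 := by
  rw [mem_lkF] at hτ
  have hd : (σ ∪ τ).card = σ.card + τ.card :=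
    Finset.card_union_of_disjoint (Finset.disjoint_iff_inter_eq_empty.2 hτ.2.2)
  have := card_le_of_dim hdim hτ.2.1
  omega

lemma lkF_empty_of_not_mem {Δ : Finset (Finset ℕ)} (hΔ : IsComplex Δ)
    {σ : Finset ℕ} (hσ : σ ∉ Δ) : lkF Δ σ = ∅ := by
  rw [Finset.eq_empty_iff_forall_notMem]
  intro τ hτ
  rw [mem_lkF] at hτ
  exact hσ (hΔ (σ ∪ τ) hτ.2.1 σ Finset.subset_union_left)

end Links
section Main1

theorem relCM_main (k : Type) [Field k] (d : ℤ) (Δ Γ : Finset (Finset ℕ))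
    (hΔ : IsComplex Δ) (hΓ : IsComplex Γ) (hdimΓ : dimIs Γ d)
    (hCM : IsCM k Γ d) (hsub : Δ ⊆ Γ) (hdepth : DepthGE k Δ d) :
    RelCM k Γ Δ d := by
  intro σ hσ i hne
  by_cases hσΔ : σ ∈ Δ
  swap
  · rw [lkF_empty_of_not_mem hΔ hσΔ, Finset.sdiff_empty]
    exact hCM σ hσ i (by omega)
  rcases lt_or_gt_of_ne hne with hlt | hgt
  swap
  · -- too high: no faces of cardinality i + 1
    refine redH_subsingleton_of_chains fun ρ hρ hc => ?_
    have hρL : ρ ∈ lkF Γ σ := (Finset.mem_sdiff.1 hρ).1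
    have := lk_card_le hdimΓ hρL
    omega
  -- main case
  obtain ⟨j, rfl⟩ : ∃ j : ℤ, i = j + 1 := ⟨i - 1, by ring⟩
  set L := lkF Γ σ with hL
  set M := lkF Δ σ with hM
  have hML : M ⊆ L := lkF_mono hsub σ
  have hQL : L \ M ⊆ L := Finset.sdiff_subset
  have hLcx : IsComplex L := lkF_complex hΓ σ
  have hMcx : IsComplex M := lkF_complex hΔ σ
  have eΓ := redH_subsingleton_iff.1 (hCM σ hσ (j+1) (by omega))
  have eΔ := redH_subsingleton_iff.1 (hdepth σ hσΔ j (by omega))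
  rw [redH_subsingleton_iff]
  intro z hz
  -- extend z by zero to a chain on L
  set zΓ : Chains k L (j+1+1) :=
    (fun ρ => if h : ρ.1 ∈ L \ M then z ⟨ρ.1, h, ρ.2.2⟩ else 0) with hzΓ
  set w : Chains k L (j+1) := bdry k L (j+1) zΓ with hw
  -- Claim A : w vanishes outside M
  have claimA : ∀ (ρ : Finset ℕ) (h1 : ρ ∈ L) (h2 : (ρ.card : ℤ) = j+1),
      ρ ∉ M → w ⟨ρ, h1, h2⟩ = 0 := by
    intro ρ h1 h2 hρM
    have hρQ : ρ ∈ L \ M := Finset.mem_sdiff.2 ⟨h1, hρM⟩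
    have hres : (fun ρ' : {σ' : Finset ℕ // σ' ∈ L \ M ∧ (σ'.card : ℤ) = j+1+1} =>
        zΓ ⟨ρ'.1, hQL ρ'.2.1, ρ'.2.2⟩) = z := by
      funext ρ'
      show zΓ _ = _
      rw [hzΓ]
      exact dif_pos ρ'.2.1
    have hr := bdry_restrict hQL (j+1) zΓ ρ
      (fun v hv h1' h2' hn => by rw [hzΓ]; exact dif_neg hn) hρQ h2
    rw [hres, hz] at hr
    exact hr
  -- w restricted to M is a cycle
  set w' : Chains k M (j+1) := (fun ρ => w ⟨ρ.1, hML ρ.2.1, ρ.2.2⟩) with hw'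
  have claimB : bdry k M j w' = 0 := by
    funext ρ
    obtain ⟨r, hrM, hrc⟩ := ρ
    have hr := bdry_restrict hML j w r
      (fun v hv h1 h2 hn => claimA _ h1 h2 hn) hrM hrc
    have hbb : bdry k L j (bdry k L (j+1) zΓ) = 0 :=
      bdry_bdry (complex_sandwich hLcx) j zΓ
    calc bdry k M j w' ⟨r, hrM, hrc⟩
        = bdry k L j w ⟨r, hML hrM, hrc⟩ := hr.symm
      _ = (0 : Chains k L j) ⟨r, hML hrM, hrc⟩ := by rw [hw, hbb]
      _ = (0 : Chains k M j) ⟨r, hrM, hrc⟩ := rfl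
  obtain ⟨y', hy'⟩ := eΔ w' claimB
  -- extend y' by zero to a chain on L
  set yΓ : Chains k L (j+1+1) :=
    (fun ρ => if h : ρ.1 ∈ M then y' ⟨ρ.1, h, ρ.2.2⟩ else 0) with hyΓ
  have claimC : bdry k L (j+1) yΓ = w := by
    funext ρ
    obtain ⟨r, hrL, hrc⟩ := ρ
    by_cases hrM : r ∈ M
    · have hres : (fun ρ' : {σ' : Finset ℕ // σ' ∈ M ∧ (σ'.card : ℤ) = j+1+1} =>
          yΓ ⟨ρ'.1, hML ρ'.2.1, ρ'.2.2⟩) = y' := by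
        funext ρ'
        show yΓ _ = _
        rw [hyΓ]
        exact dif_pos ρ'.2.1
      have hr := bdry_restrict hML (j+1) yΓ r
        (fun v hv h1 h2 hn => by rw [hyΓ]; exact dif_neg hn) hrM hrc
      rw [hres, hy'] at hr
      exact hr
    · have h0 : bdry k L (j+1) yΓ ⟨r, hrL, hrc⟩ = 0 := by
        refine bdry_eq_zero (j+1) yΓ r (fun v hv h1 h2 => ?_) hrL hrc
        rw [hyΓ]
        refine dif_neg fun hins => hrM ?_
        exact hMcx _ hins r (Finset.subset_insert v r)
      rw [h0, claimA r hrL hrc hrM]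
  have hcycle : bdry k L (j+1) (zΓ - yΓ) = 0 := by
    rw [map_sub, claimC, hw, sub_self]
  obtain ⟨Y, hY⟩ := eΓ (zΓ - yΓ) hcycle
  refine ⟨fun ρ => Y ⟨ρ.1, hQL ρ.2.1, ρ.2.2⟩, ?_⟩
  funext ρ
  obtain ⟨r, hrQ, hrc⟩ := ρ
  have hrM : r ∉ M := (Finset.mem_sdiff.1 hrQ).2
  have hr := bdry_restrict hQL (j+1+1) Y r
    (fun v hv h1 h2 hn => by
      exfalso
      have hins : insert v r ∈ M := by
        by_contra hnn
        exact hn (Finset.mem_sdiff.2 ⟨h1, hnn⟩)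
      exact hrM (hMcx _ hins r (Finset.subset_insert v r)))
    hrQ hrc
  have hYval : bdry k L (j+1+1) Y ⟨r, hQL hrQ, hrc⟩ = z ⟨r, hrQ, hrc⟩ := by
    rw [hY]
    show zΓ ⟨r, hQL hrQ, hrc⟩ - yΓ ⟨r, hQL hrQ, hrc⟩ = _
    rw [hzΓ, hyΓ]
    show (if h : r ∈ L \ M then z ⟨r, h, hrc⟩ else 0) - (if h : r ∈ M then _ else 0) = _
    rw [dif_pos hrQ, dif_neg hrM, sub_zero]
  rw [← hr, hYval]

end Main1
section Skeleton
variable {k : Type} [Field k]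

lemma mem_skeleton {n : ℕ} {d : ℤ} {σ : Finset ℕ} :
    σ ∈ skeleton n d ↔ σ ⊆ Finset.Icc 1 (n+1) ∧ (σ.card : ℤ) ≤ d + 1 := by
  simp [skeleton, Finset.mem_filter, Finset.mem_powerset]

lemma skeleton_complex (n : ℕ) (d : ℤ) : IsComplex (skeleton n d) := by
  intro σ hσ τ hτ
  rw [mem_skeleton] at hσ ⊢
  have := Finset.card_le_card hτ
  exact ⟨hτ.trans hσ.1, by have := hσ.2; omega⟩

lemma mem_lk_skeleton {n : ℕ} {d : ℤ} {σ τ : Finset ℕ}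
    (hσ : σ ∈ skeleton n d) :
    τ ∈ lkF (skeleton n d) σ ↔
      τ ⊆ Finset.Icc 1 (n+1) \ σ ∧ (σ.card : ℤ) + (τ.card : ℤ) ≤ d + 1 := by
  rw [mem_skeleton] at hσ
  rw [mem_lkF, mem_skeleton, mem_skeleton]
  constructor
  · rintro ⟨⟨hτI, hτc⟩, ⟨hstI, hstc⟩, hdisj⟩
    have hcard : (σ ∪ τ).card = σ.card + τ.card :=
      Finset.card_union_of_disjoint (Finset.disjoint_iff_inter_eq_empty.2 hdisj)
    refine ⟨fun x hx => Finset.mem_sdiff.2 ⟨hτI hx, fun hxσ => ?_⟩, by omega⟩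
    have : x ∈ σ ∩ τ := Finset.mem_inter.2 ⟨hxσ, hx⟩
    rw [hdisj] at this
    exact absurd this (Finset.notMem_empty x)
  · rintro ⟨hsub, hbound⟩
    have hτI : τ ⊆ Finset.Icc 1 (n+1) := hsub.trans (Finset.sdiff_subset)
    have hdisj : Disjoint σ τ := by
      rw [Finset.disjoint_right]
      intro x hx
      exact (Finset.mem_sdiff.1 (hsub hx)).2
    have hinter : σ ∩ τ = ∅ := Finset.disjoint_iff_inter_eq_empty.1 hdisj
    have hcard : (σ ∪ τ).card = σ.card + τ.card := Finset.card_union_of_disjoint hdisj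
    have hσ0 : (0:ℤ) ≤ (σ.card : ℤ) := Int.ofNat_nonneg _
    refine ⟨⟨hτI, by omega⟩, ⟨Finset.union_subset hσ.1 hτI, by omega⟩, hinter⟩

theorem skeleton_CM (n : ℕ) (d : ℤ) (hdn : d ≤ (n : ℤ)) : IsCM k (skeleton n d) d := by
  intro σ hσ i hi
  set L := lkF (skeleton n d) σ with hLdef
  have hσ' := mem_skeleton.1 hσ
  have hmemL : ∀ τ, τ ∈ L ↔
      τ ⊆ Finset.Icc 1 (n+1) \ σ ∧ (σ.card : ℤ) + (τ.card : ℤ) ≤ d + 1 :=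
    fun τ => mem_lk_skeleton hσ
  rcases lt_or_gt_of_ne hi with hlt | hgt
  swap
  · -- i > d - |σ| : no faces of cardinality i+1
    refine redH_subsingleton_of_chains fun ρ hρ hc => ?_
    have := (hmemL ρ).1 hρ
    omega
  -- i < d - |σ| : cone construction
  rw [redH_subsingleton_iff]
  intro z hz
  by_cases hneg : i + 1 < 0
  · refine ⟨0, ?_⟩
    rw [map_zero]
    funext ρ
    have h0 : (0:ℤ) ≤ (ρ.1.card : ℤ) := Int.ofNat_nonneg _
    exact absurd ρ.2.2 (by omega)
  push_neg at hneg
  have hσd : (σ.card : ℤ) ≤ d := by omega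
  -- find a cone vertex
  have hIc : (Finset.Icc 1 (n+1)).card = n + 1 := by rw [Nat.card_Icc]; omega
  have hσIcc : σ ⊆ Finset.Icc 1 (n+1) := hσ'.1
  have hsd : (Finset.Icc 1 (n+1) \ σ).card = (n+1) - σ.card := by
    rw [Finset.card_sdiff_of_subset hσIcc, hIc]
  have hσn : (σ.card : ℤ) < (n:ℤ) + 1 := by omega
  have hpos : 0 < (Finset.Icc 1 (n+1) \ σ).card := by
    have hle : σ.card ≤ (Finset.Icc 1 (n+1)).card := Finset.card_le_card hσIcc
    omega
  obtain ⟨v₀, hv₀⟩ := Finset.card_pos.1 hpos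
  have hv₀L : {v₀} ∈ L := (hmemL {v₀}).2 ⟨Finset.singleton_subset_iff.2 hv₀, by
    rw [Finset.card_singleton]; omega⟩
  have hv₀sup : v₀ ∈ L.sup id := subset_sup hv₀L (Finset.mem_singleton_self v₀)
  -- the cone
  set y : Chains k L (i+1+1) := (fun ρ =>
    if h : v₀ ∈ ρ.1 ∧ ρ.1.erase v₀ ∈ L ∧ ((ρ.1.erase v₀).card : ℤ) = i+1 then
      (-1:k) ^ ((ρ.1.filter (· < v₀)).card) * z ⟨ρ.1.erase v₀, h.2.1, h.2.2⟩
    else 0) with hy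
  refine ⟨y, ?_⟩
  funext τ
  obtain ⟨t, htL, htc⟩ := τ
  obtain ⟨htsub, htbound⟩ := (hmemL t).1 htL
  by_cases hv₀t : v₀ ∈ t
  · -- v₀ ∈ t : use that z is a cycle at t.erase v₀
    have hLcx : IsComplex L := lkF_complex (skeleton_complex n d) σ
    have hte : t.erase v₀ ∈ L := hLcx t htL _ (Finset.erase_subset v₀ t)
    have htpos : 0 < t.card := Finset.card_pos.2 ⟨v₀, hv₀t⟩
    have htec : ((t.erase v₀).card : ℤ) = i := by
      rw [Finset.card_erase_of_mem hv₀t]; omega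
    have hz0 : (∑ u ∈ (L.sup id) \ (t.erase v₀),
        if h : insert u (t.erase v₀) ∈ L ∧ ((insert u (t.erase v₀)).card : ℤ) = i + 1 then
          (-1 : k) ^ ((t.erase v₀).filter (· < u)).card * z ⟨insert u (t.erase v₀), h⟩
        else 0) = 0 := congrFun hz ⟨t.erase v₀, hte, htec⟩
    have hsplit : L.sup id \ (t.erase v₀) = insert v₀ (L.sup id \ t) := by
      ext x
      simp only [Finset.mem_sdiff, Finset.mem_erase, Finset.mem_insert]
      constructor
      · rintro ⟨hxs, hxe⟩
        by_cases hx : x = v₀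
        · exact Or.inl hx
        · exact Or.inr ⟨hxs, fun hxt => hxe ⟨hx, hxt⟩⟩
      · rintro (rfl | ⟨hxs, hxt⟩)
        · exact ⟨hv₀sup, fun h => h.1 rfl⟩
        · exact ⟨hxs, fun h => hxt h.2⟩
    rw [hsplit, Finset.sum_insert (fun h => (Finset.mem_sdiff.1 h).2 hv₀t)] at hz0
    have hiv : insert v₀ (t.erase v₀) = t := Finset.insert_erase hv₀t
    have hcondv₀ : insert v₀ (t.erase v₀) ∈ L ∧
        ((insert v₀ (t.erase v₀)).card : ℤ) = i + 1 := by
      rw [hiv]; exact ⟨htL, htc⟩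
    rw [dif_pos hcondv₀] at hz0
    have hargt : (⟨insert v₀ (t.erase v₀), hcondv₀⟩ :
        {σ' : Finset ℕ // σ' ∈ L ∧ (σ'.card : ℤ) = i+1}) = ⟨t, htL, htc⟩ :=
      Subtype.ext hiv
    rw [hargt] at hz0
    have hfe : ((t.erase v₀).filter (· < v₀)).card = (t.filter (· < v₀)).card := by
      rw [Finset.filter_erase, Finset.erase_eq_of_notMem]
      exact fun h => lt_irrefl v₀ (Finset.mem_filter.1 h).2
    rw [hfe] at hz0
    show (∑ v ∈ (L.sup id) \ t,
        if h : insert v t ∈ L ∧ ((insert v t).card : ℤ) = i + 1 + 1 then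
          (-1 : k) ^ (t.filter (· < v)).card * y ⟨insert v t, h⟩
        else 0) = z ⟨t, htL, htc⟩
    have hterm : ∀ v ∈ (L.sup id) \ t,
        (if h : insert v t ∈ L ∧ ((insert v t).card : ℤ) = i + 1 + 1 then
          (-1 : k) ^ (t.filter (· < v)).card * y ⟨insert v t, h⟩
        else 0)
        = (-(-1:k) ^ (t.filter (· < v₀)).card) *
          (if h : insert v (t.erase v₀) ∈ L ∧
              ((insert v (t.erase v₀)).card : ℤ) = i + 1 then
            (-1 : k) ^ ((t.erase v₀).filter (· < v)).card * z ⟨insert v (t.erase v₀), h⟩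
          else 0) := by
      intro v hv
      have hvt : v ∉ t := (Finset.mem_sdiff.1 hv).2
      have hvv₀ : v ≠ v₀ := fun h => hvt (h ▸ hv₀t)
      have heq : (insert v t).erase v₀ = insert v (t.erase v₀) :=
        Finset.erase_insert_of_ne hvv₀
      by_cases hC2 : insert v (t.erase v₀) ∈ L ∧ ((insert v (t.erase v₀)).card : ℤ) = i + 1
      · have hvIcc : v ∈ Finset.Icc 1 (n+1) \ σ :=
          ((hmemL _).1 hC2.1).1 (Finset.mem_insert_self v _)
        have hC1 : insert v t ∈ L ∧ ((insert v t).card : ℤ) = i + 1 + 1 := by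
          refine ⟨(hmemL _).2 ⟨Finset.insert_subset hvIcc htsub, ?_⟩, ?_⟩
          · rw [card_insert_int hvt]; omega
          · rw [card_insert_int hvt, htc]
        rw [dif_pos hC1, dif_pos hC2]
        simp only [hy]
        have hcondy : v₀ ∈ insert v t ∧ (insert v t).erase v₀ ∈ L ∧
            (((insert v t).erase v₀).card : ℤ) = i + 1 :=
          ⟨Finset.mem_insert_of_mem hv₀t, by rw [heq]; exact hC2.1, by rw [heq]; exact hC2.2⟩
        rw [dif_pos hcondy]
        have hargz : (⟨(insert v t).erase v₀, hcondy.2.1, hcondy.2.2⟩ :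
            {σ' : Finset ℕ // σ' ∈ L ∧ (σ'.card : ℤ) = i + 1})
            = ⟨insert v (t.erase v₀), hC2⟩ := Subtype.ext heq
        rw [hargz]
        have hs1 : ((insert v t).filter (· < v₀)).card
            = (t.filter (· < v₀)).card + if v < v₀ then 1 else 0 := filter_card_insert hvt
        have hs2 : (t.filter (· < v)).card
            = ((t.erase v₀).filter (· < v)).card + if v₀ < v then 1 else 0 := by
          conv_lhs => rw [← Finset.insert_erase hv₀t]
          exact filter_card_insert (Finset.notMem_erase v₀ t)
        rw [hs1, hs2]
        rcases lt_or_gt_of_ne hvv₀ with h | h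
        · rw [if_pos h, if_neg (asymm h), add_zero, pow_succ]; ring
        · rw [if_neg (asymm h), if_pos h, add_zero, pow_succ]; ring
      · have hC1 : ¬(insert v t ∈ L ∧ ((insert v t).card : ℤ) = i + 1 + 1) := by
          rintro ⟨hmem, hcard⟩
          apply hC2
          refine ⟨hLcx _ hmem _ (by rw [← heq]; exact Finset.erase_subset v₀ (insert v t)), ?_⟩
          rw [← heq, Finset.card_erase_of_mem (Finset.mem_insert_of_mem hv₀t)]
          omega
        rw [dif_neg hC1, dif_neg hC2, mul_zero]
    rw [Finset.sum_congr rfl hterm, ← Finset.mul_sum]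
    have hpow : (-1:k) ^ (t.filter (· < v₀)).card * (-1:k) ^ (t.filter (· < v₀)).card
        = 1 := by
      rw [← pow_add]
      exact Even.neg_one_pow ⟨(t.filter (· < v₀)).card, rfl⟩
    linear_combination (-(-1:k) ^ (t.filter (· < v₀)).card) * hz0
      + z ⟨t, htL, htc⟩ * hpow
  · -- v₀ ∉ t : single term
    rw [bdry_apply]
    have hins : insert v₀ t ∈ L := (hmemL _).2 ⟨Finset.insert_subset hv₀ htsub, by
      rw [card_insert_int hv₀t]; omega⟩
    have hinsc : ((insert v₀ t).card : ℤ) = i + 1 + 1 := by rw [card_insert_int hv₀t, htc]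
    rw [Finset.sum_eq_single v₀ ?_ ?_]
    · rw [dif_pos ⟨hins, hinsc⟩]
      simp only [hy]
      have her : (insert v₀ t).erase v₀ = t := Finset.erase_insert hv₀t
      have hcond : v₀ ∈ insert v₀ t ∧ (insert v₀ t).erase v₀ ∈ L ∧
          (((insert v₀ t).erase v₀).card : ℤ) = i+1 :=
        ⟨Finset.mem_insert_self v₀ t, by rw [her]; exact htL, by rw [her]; exact htc⟩
      rw [dif_pos hcond]
      have harg : (⟨(insert v₀ t).erase v₀, hcond.2.1, hcond.2.2⟩ :
          {σ' : Finset ℕ // σ' ∈ L ∧ (σ'.card : ℤ) = i+1}) = ⟨t, htL, htc⟩ :=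
        Subtype.ext her
      rw [harg]
      have hfc : ((insert v₀ t).filter (· < v₀)).card = (t.filter (· < v₀)).card := by
        rw [filter_card_insert hv₀t, if_neg (lt_irrefl v₀), add_zero]
      rw [hfc, ← mul_assoc, ← pow_add]
      rw [Even.neg_one_pow ⟨(t.filter (· < v₀)).card, rfl⟩, one_mul]
    · intro b hb hbv
      by_cases hC : insert b t ∈ L ∧ ((insert b t).card : ℤ) = i + 1 + 1
      · rw [dif_pos hC]
        simp only [hy]
        rw [dif_neg, mul_zero]
        rintro ⟨hv₀mem, -⟩
        rcases Finset.mem_insert.1 hv₀mem with h | h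
        · exact hbv h.symm
        · exact hv₀t h
      · rw [dif_neg hC]
    · intro hnot
      exact absurd (Finset.mem_sdiff.2 ⟨hv₀sup, hv₀t⟩) hnot

end Skeleton

/-- If `Δ` is a `d`-dimensional complex with `depth k[Δ] ≥ d = dim k[Δ] - 1`, then every
`d`-dimensional Cohen–Macaulay complex `Γ ⊇ Δ` is a Cohen–Macaulay extender for `Δ`,
i.e. `(Γ,Δ)` is relative Cohen–Macaulay.  In particular, if the vertices of `Δ` lie in
`[n+1]`, the `d`-skeleton of the `n`-simplex is a Cohen–Macaulay extender for `Δ`. -/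
theorem CM_extender_of_depth (k : Type) [Field k] (d : ℤ)
    (Δ : Finset (Finset ℕ)) (hΔ : IsComplex Δ) (hdim : dimIs Δ d)
    (hdepth : DepthGE k Δ d) :
    (∀ Γ : Finset (Finset ℕ), IsComplex Γ → dimIs Γ d → IsCM k Γ d → Δ ⊆ Γ →
      RelCM k Γ Δ d) ∧
    (∀ n : ℕ, (∀ σ ∈ Δ, σ ⊆ Finset.Icc 1 (n + 1)) →
      IsComplex (skeleton n d) ∧ dimIs (skeleton n d) d ∧ Δ ⊆ skeleton n d ∧
        IsCM k (skeleton n d) d ∧ RelCM k (skeleton n d) Δ d) := by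
  constructor
  · intro Γ hΓ hdimΓ hCM hsub
    exact relCM_main k d Δ Γ hΔ hΓ hdimΓ hCM hsub hdepth
  · intro n hΔn
    obtain ⟨hne, hsup⟩ := hdim
    obtain ⟨σ₀, hσ₀Δ, hσ₀⟩ := Finset.exists_mem_eq_sup Δ hne Finset.card
    have hσ₀c : (σ₀.card : ℤ) = d + 1 := by rw [← hσ₀]; exact hsup
    have hd1 : 0 ≤ d + 1 := by omega
    have hIc : (Finset.Icc 1 (n+1)).card = n + 1 := by rw [Nat.card_Icc]; omega
    have hdn : d ≤ (n : ℤ) := by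
      have := Finset.card_le_card (hΔn σ₀ hσ₀Δ)
      omega
    have hσ₀sk : σ₀ ∈ skeleton n d :=
      mem_skeleton.2 ⟨hΔn σ₀ hσ₀Δ, le_of_eq hσ₀c⟩
    have hA : IsComplex (skeleton n d) := skeleton_complex n d
    have hB : dimIs (skeleton n d) d := by
      constructor
      · exact ⟨σ₀, hσ₀sk⟩
      · have hs : (skeleton n d).sup Finset.card = σ₀.card :=
          le_antisymm (Finset.sup_le fun τ hτ => by
            have := (mem_skeleton.1 hτ).2; omega) (Finset.le_sup hσ₀sk)
        rw [hs]
        exact hσ₀c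
    have hC : Δ ⊆ skeleton n d := fun τ hτ =>
      mem_skeleton.2 ⟨hΔn τ hτ, card_le_of_dim ⟨hne, hsup⟩ hτ⟩
    have hD : IsCM k (skeleton n d) d := skeleton_CM n d hdn
    exact ⟨hA, hB, hC, hD, relCM_main k d Δ (skeleton n d) hΔ hA hB hD hC hdepth⟩
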